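/- Let M > 1. There exist κ₀ = κ₀(M) > 0 and λ* = λ*(M) > 0 such that for all 0 ≤ κ ≤ κ₀ and all integers m with 1 ≤ m ≤ M, and any function φ'_κ : [-1,1] → ℝ that is continuous, negative on (-1,1), and satisfies ‖φ'_κ + 1/2‖_{L¹([-1,1])} ≤ C κ, the equation 1 = (1/(2m)) ∫_{-1}^{1} (-φ'_κ(z̄)) / (1 + λ - z̄) dz̄ has a unique solution λ = λ₁ with λ₁ ≥ λ*. -/

import Mathlib

open Real MeasureTheory

theorem eigenvalue_equation_unique_solution (C : ℝ) (hC : 0 < C) (M : ℝ) (hM : 1 < M) :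
    ∃ κ₀ > (0:ℝ), ∃ lamstar > (0:ℝ), ∀ κ : ℝ, 0 ≤ κ → κ ≤ κ₀ →
      ∀ m : ℕ, 1 ≤ m → (m : ℝ) ≤ M →
        ∀ φ' : ℝ → ℝ, ContinuousOn φ' (Set.Icc (-1) 1) →
          (∀ z ∈ Set.Ioo (-1:ℝ) 1, φ' z < 0) →
          (∫ z in (-1:ℝ)..1, |φ' z + 1/2|) ≤ C * κ →
          ∃! lam : ℝ, lamstar ≤ lam ∧
            1 = (1 / (2 * m)) * ∫ z in (-1:ℝ)..1, (-φ' z) / (1 + lam - z) := by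
  have hM0 : (0:ℝ) < M := by linarith
  set l : ℝ := 2 * Real.exp (-(8 * M)) with hl
  have hl0 : 0 < l := by positivity
  have hexp2 : (2:ℝ) ≤ Real.exp 1 := by
    have := Real.add_one_le_exp 1; linarith
  have hl1 : l < 1 := by
    have h1 : Real.exp (-(8*M)) < Real.exp (-1) := by
      apply Real.exp_lt_exp.mpr; linarith
    have h2 : Real.exp (-1) ≤ 1/2 := by
      rw [Real.exp_neg, inv_eq_one_div]
      exact one_div_le_one_div_of_le (by norm_num) hexp2
    nlinarith [Real.exp_pos (-(8*M))]
  refine ⟨l / C, by positivity, l, hl0, ?_⟩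
  intro κ hκ0 hκub m hm1 hmM φ' hcont hneg hL1
  have hm0 : (0:ℝ) < (m:ℝ) := by exact_mod_cast hm1
  have hm1' : (1:ℝ) ≤ (m:ℝ) := by exact_mod_cast hm1
  have hmne : ((m:ℝ)) ≠ 0 := ne_of_gt hm0
  have hCκ : C * κ ≤ l := by
    calc C * κ ≤ C * (l / C) := by
          apply mul_le_mul_of_nonneg_left hκub hC.le
      _ = l := by field_simp
  have huIcc : Set.uIcc (-1:ℝ) 1 = Set.Icc (-1:ℝ) 1 := Set.uIcc_of_le (by norm_num)
  -- integrability helper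
  have hIntg : ∀ (g : ℝ → ℝ), ContinuousOn g (Set.Icc (-1:ℝ) 1) → ∀ lam : ℝ, 0 < lam →
      IntervalIntegrable (fun z => g z / (1 + lam - z)) volume (-1) 1 := by
    intro g hg lam hlam
    apply ContinuousOn.intervalIntegrable
    rw [huIcc]
    apply hg.div ((continuous_const.sub continuous_id).continuousOn)
    intro z hz
    have hz2 : z ≤ 1 := hz.2
    have : (0:ℝ) < 1 + lam - z := by linarith
    exact ne_of_gt this
  -- φ' ≤ 0 on closed interval
  have hφle : ∀ z ∈ Set.Icc (-1:ℝ) 1, φ' z ≤ 0 := by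
    intro z hz
    have hzc : z ∈ closure (Set.Ioo (-1:ℝ) 1) := by
      rw [closure_Ioo (by norm_num : (-1:ℝ) ≠ 1)]; exact hz
    have hne : (nhdsWithin z (Set.Ioo (-1:ℝ) 1)).NeBot :=
      mem_closure_iff_nhdsWithin_neBot.mp hzc
    have htt : Filter.Tendsto φ' (nhdsWithin z (Set.Ioo (-1:ℝ) 1)) (nhds (φ' z)) :=
      (hcont z hz).mono Set.Ioo_subset_Icc_self
    exact le_of_tendsto htt
      (Filter.eventually_of_mem self_mem_nhdsWithin fun x hx => (hneg x hx).le)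
  -- the log integral
  have hlog : ∀ lam : ℝ, 0 < lam →
      (∫ z in (-1:ℝ)..1, 1 / (1 + lam - z)) = Real.log ((2 + lam) / lam) := by
    intro lam hlam
    have h1 : (∫ z in (-1:ℝ)..1, 1 / (1 + lam - z))
        = ∫ u in (1 + lam - 1)..(1 + lam - (-1)), 1 / u :=
      intervalIntegral.integral_comp_sub_left (fun u => 1 / u) (1 + lam)
    have e1 : (1:ℝ) + lam - 1 = lam := by ring
    have e2 : (1:ℝ) + lam - (-1) = 2 + lam := by ring
    rw [h1, e1, e2, integral_one_div]
    intro h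
    rw [Set.uIcc_of_le (by linarith)] at h
    exact absurd h.1 (by linarith)
  -- lower bound at l
  have hJl : (4 * M - 1 : ℝ) ≤ ∫ z in (-1:ℝ)..1, (-φ' z) / (1 + l - z) := by
    have hint1 : IntervalIntegrable (fun z => (1/2 : ℝ) / (1 + l - z)) volume (-1) 1 :=
      hIntg (fun _ => (1/2 : ℝ)) continuousOn_const l hl0
    have hint2 : IntervalIntegrable (fun z => (φ' z + 1/2) / (1 + l - z)) volume (-1) 1 :=
      hIntg (fun z => φ' z + 1/2) (hcont.add continuousOn_const) l hl0
    have hsplit : (∫ z in (-1:ℝ)..1, (-φ' z) / (1 + l - z))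
        = (∫ z in (-1:ℝ)..1, (1/2 : ℝ) / (1 + l - z))
          - ∫ z in (-1:ℝ)..1, (φ' z + 1/2) / (1 + l - z) := by
      rw [← intervalIntegral.integral_sub hint1 hint2]
      apply intervalIntegral.integral_congr
      intro z _
      show -φ' z / (1 + l - z) = 1/2 / (1 + l - z) - (φ' z + 1/2) / (1 + l - z)
      rw [div_sub_div_same]
      congr 1; ring
    have hhalf : (∫ z in (-1:ℝ)..1, (1/2 : ℝ) / (1 + l - z))
        = (1/2) * Real.log ((2 + l) / l) := by
      rw [← hlog l hl0, ← intervalIntegral.integral_const_mul]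
      apply intervalIntegral.integral_congr
      intro z _
      exact div_eq_mul_one_div _ _
    have herr : |∫ z in (-1:ℝ)..1, (φ' z + 1/2) / (1 + l - z)| ≤ 1 := by
      have habs : IntervalIntegrable (fun z => |(φ' z + 1/2) / (1 + l - z)|) volume (-1) 1 :=
        hint2.abs
      have hmul : IntervalIntegrable (fun z => |φ' z + 1/2| * (1/l)) volume (-1) 1 := by
        apply ContinuousOn.intervalIntegrable
        rw [huIcc]
        exact ((hcont.add continuousOn_const).abs.mul continuousOn_const)
      calc |∫ z in (-1:ℝ)..1, (φ' z + 1/2) / (1 + l - z)|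
          ≤ ∫ z in (-1:ℝ)..1, |(φ' z + 1/2) / (1 + l - z)| :=
            intervalIntegral.abs_integral_le_integral_abs (by norm_num)
        _ ≤ ∫ z in (-1:ℝ)..1, |φ' z + 1/2| * (1/l) := by
            apply intervalIntegral.integral_mono_on (by norm_num) habs hmul
            intro z hz
            have hz2 : z ≤ 1 := hz.2
            have hd : (0:ℝ) < 1 + l - z := by linarith
            show |(φ' z + 1/2) / (1 + l - z)| ≤ |φ' z + 1/2| * (1/l)
            rw [abs_div, abs_of_pos hd, ← div_eq_mul_one_div]
            exact div_le_div_of_nonneg_left (abs_nonneg _) hl0 (by linarith)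
        _ = (∫ z in (-1:ℝ)..1, |φ' z + 1/2|) * (1/l) :=
            intervalIntegral.integral_mul_const _ _
        _ ≤ l * (1/l) := by
            apply mul_le_mul_of_nonneg_right (le_trans hL1 hCκ) (by positivity)
        _ = 1 := by field_simp
    have hln : (8:ℝ) * M ≤ Real.log ((2 + l) / l) := by
      have h2l : (2:ℝ)/l ≤ (2 + l)/l := by gcongr; linarith
      have hlog2 : Real.log ((2:ℝ)/l) ≤ Real.log ((2 + l)/l) := by
        gcongr
      have h2 : (2:ℝ)/l = Real.exp (8 * M) := by
        rw [hl, Real.exp_neg]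
        field_simp
      rw [h2, Real.log_exp] at hlog2
      exact hlog2
    have := abs_le.mp herr
    rw [hsplit, hhalf]
    nlinarith [this.2]
  -- upper bound at 1 + l
  have hJb : (∫ z in (-1:ℝ)..1, (-φ' z) / (1 + (1 + l) - z)) ≤ 1 := by
    have hintb : IntervalIntegrable (fun z => (-φ' z) / (1 + (1 + l) - z)) volume (-1) 1 :=
      hIntg (fun z => -φ' z) hcont.neg (1 + l) (by linarith)
    have hintc : IntervalIntegrable (fun z => (-φ' z) * (1/(1+l))) volume (-1) 1 := by
      apply ContinuousOn.intervalIntegrable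
      rw [huIcc]
      exact hcont.neg.mul continuousOn_const
    have step1 : (∫ z in (-1:ℝ)..1, (-φ' z) / (1 + (1 + l) - z))
        ≤ ∫ z in (-1:ℝ)..1, (-φ' z) * (1/(1+l)) := by
      apply intervalIntegral.integral_mono_on (by norm_num) hintb hintc
      intro z hz
      have hz2 : z ≤ 1 := hz.2
      rw [← div_eq_mul_one_div]
      exact div_le_div_of_nonneg_left (neg_nonneg.mpr (hφle z hz)) (by linarith) (by linarith)
    have step2 : (∫ z in (-1:ℝ)..1, (-φ' z) * (1/(1+l)))
        = (∫ z in (-1:ℝ)..1, -φ' z) * (1/(1+l)) :=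
      intervalIntegral.integral_mul_const _ _
    have hintφ : IntervalIntegrable (fun z => -φ' z) volume (-1) 1 := by
      apply ContinuousOn.intervalIntegrable; rw [huIcc]; exact hcont.neg
    have hintd : IntervalIntegrable (fun z => 1/2 + |φ' z + 1/2|) volume (-1) 1 := by
      apply ContinuousOn.intervalIntegrable; rw [huIcc]
      exact continuousOn_const.add (hcont.add continuousOn_const).abs
    have step3 : (∫ z in (-1:ℝ)..1, -φ' z) ≤ 1 + l := by
      have hmono : (∫ z in (-1:ℝ)..1, -φ' z)
          ≤ ∫ z in (-1:ℝ)..1, (1/2 + |φ' z + 1/2|) := by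
        apply intervalIntegral.integral_mono_on (by norm_num) hintφ hintd
        intro z _
        have := neg_le_abs (φ' z + 1/2)
        linarith
      have heq : (∫ z in (-1:ℝ)..1, (1/2 + |φ' z + 1/2|))
          = 1 + ∫ z in (-1:ℝ)..1, |φ' z + 1/2| := by
        rw [intervalIntegral.integral_add intervalIntegrable_const
          (by apply ContinuousOn.intervalIntegrable; rw [huIcc]
              exact (hcont.add continuousOn_const).abs)]
        norm_num
      rw [heq] at hmono
      linarith [le_trans hL1 hCκ]
    calc (∫ z in (-1:ℝ)..1, (-φ' z) / (1 + (1 + l) - z))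
        ≤ (∫ z in (-1:ℝ)..1, -φ' z) * (1/(1+l)) := by rw [← step2]; exact step1
      _ ≤ (1 + l) * (1/(1+l)) := by
          apply mul_le_mul_of_nonneg_right step3 (by positivity)
      _ = 1 := by field_simp
  -- strict antitonicity
  have hanti : ∀ a b : ℝ, l ≤ a → a < b →
      (∫ z in (-1:ℝ)..1, (-φ' z) / (1 + b - z)) < ∫ z in (-1:ℝ)..1, (-φ' z) / (1 + a - z) := by
    intro a b hla hab
    have ha0 : 0 < a := lt_of_lt_of_le hl0 hla
    have hb0 : 0 < b := by linarith
    have hint_a := hIntg (fun z => -φ' z) hcont.neg a ha0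
    have hint_b := hIntg (fun z => -φ' z) hcont.neg b hb0
    have hpos : 0 < ∫ z in (-1:ℝ)..1,
        ((-φ' z) / (1 + a - z) - (-φ' z) / (1 + b - z)) := by
      apply intervalIntegral.intervalIntegral_pos_of_pos_on (hint_a.sub hint_b)
      · intro z hz
        have h1 : 0 < -φ' z := neg_pos.mpr (hneg z hz)
        have h2 : 0 < 1 + a - z := by have := hz.2; linarith
        exact sub_pos.mpr (div_lt_div_of_pos_left h1 h2 (by linarith))
      · norm_num
    rw [intervalIntegral.integral_sub hint_a hint_b] at hpos
    linarith
  -- the continuous surrogate G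
  have hψmem : ∀ z : ℝ, max (-1) (min z 1) ∈ Set.Icc (-1:ℝ) 1 :=
    fun z => ⟨le_max_left _ _, max_le (by norm_num) (min_le_right _ _)⟩
  have hψ : Continuous fun z : ℝ => φ' (max (-1) (min z 1)) := by
    apply hcont.comp_continuous
    · exact continuous_const.max (continuous_id.min continuous_const)
    · exact hψmem
  have hden : ∀ p : ℝ × ℝ, (0:ℝ) < 1 + max p.1 l - min p.2 1 := by
    intro p
    have h1 : l ≤ max p.1 l := le_max_right _ _
    have h2 : min p.2 1 ≤ 1 := min_le_right _ _
    linarith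
  have hFc : Continuous (Function.uncurry fun lam z : ℝ =>
      (-φ' (max (-1) (min z 1))) / (1 + max lam l - min z 1)) := by
    apply Continuous.div
    · exact (hψ.comp continuous_snd).neg
    · exact (continuous_const.add (continuous_fst.max continuous_const)).sub
        (continuous_snd.min continuous_const)
    · exact fun p => ne_of_gt (hden p)
  have hGc : Continuous fun lam : ℝ => ∫ z in (-1:ℝ)..1,
      (-φ' (max (-1) (min z 1))) / (1 + max lam l - min z 1) :=
    intervalIntegral.continuous_parametric_intervalIntegral_of_continuous' hFc (-1) 1
  have hGJ : ∀ lam : ℝ, l ≤ lam →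
      (∫ z in (-1:ℝ)..1, (-φ' (max (-1) (min z 1))) / (1 + max lam l - min z 1))
        = ∫ z in (-1:ℝ)..1, (-φ' z) / (1 + lam - z) := by
    intro lam hlam
    apply intervalIntegral.integral_congr
    intro z hz
    rw [huIcc] at hz
    show -φ' (max (-1) (min z 1)) / (1 + max lam l - min z 1) = -φ' z / (1 + lam - z)
    rw [max_eq_left hlam, min_eq_left hz.2, max_eq_right hz.1]
  -- intermediate value theorem
  have hJl2m : (2:ℝ) * m < ∫ z in (-1:ℝ)..1, (-φ' z) / (1 + l - z) := by
    have : (2:ℝ) * m ≤ 2 * M := by linarith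
    nlinarith
  have hJb2m : (∫ z in (-1:ℝ)..1, (-φ' z) / (1 + (1 + l) - z)) < 2 * m := by
    linarith
  have hmemIcc : (2:ℝ) * m ∈ Set.Icc
      (∫ z in (-1:ℝ)..1, (-φ' (max (-1) (min z 1))) / (1 + max (1+l) l - min z 1))
      (∫ z in (-1:ℝ)..1, (-φ' (max (-1) (min z 1))) / (1 + max l l - min z 1)) := by
    constructor
    · rw [hGJ (1+l) (by linarith)]; exact le_of_lt hJb2m
    · rw [hGJ l le_rfl]; exact le_of_lt hJl2m
  obtain ⟨x, hx, hGx⟩ := intermediate_value_Icc' (by linarith : l ≤ 1 + l)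
    hGc.continuousOn hmemIcc
  have hJx : (∫ z in (-1:ℝ)..1, (-φ' z) / (1 + x - z)) = 2 * m := by
    rw [← hGJ x hx.1]; exact hGx
  refine ⟨x, ⟨hx.1, ?_⟩, ?_⟩
  · rw [hJx]; field_simp
  · rintro y ⟨hyl, hy⟩
    have hJy : (∫ z in (-1:ℝ)..1, (-φ' z) / (1 + y - z)) = 2 * m := by
      have h2m : (2 * (m:ℝ)) ≠ 0 := by positivity
      field_simp at hy
      simp only [neg_div] at hy ⊢
      linarith
    by_contra hne
    rcases lt_trichotomy y x with h | h | h
    · have := hanti y x hyl h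
      rw [hJx, hJy] at this
      exact lt_irrefl _ this
    · exact hne h
    · have := hanti x y hx.1 h
      rw [hJx, hJy] at this
      exact lt_irrefl _ this
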